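/- Let A ∈ [0,1], γ ∈ [0,1], and let |ψ⟩ = √((1+A)/2)|01⟩ + i√((1−A)/2)|10⟩ be a dual-rail two-qubit state with density matrix ρ = |ψ⟩⟨ψ|. Let ε = ε_AD ⊗ ε_AD, where ε_AD is the single-qubit amplitude damping channel with Kraus operators M₀ = diag(1, √(1−γ)) and M₁ = [[0, √γ],[0,0]]; that is, ε has the four Kraus operators Mₐ ⊗ M_b, a,b ∈ {0,1}. Then F_{l₁}(ρ) − F_{l₁}(ε(ρ)) = F_R(ρ) − F_R(ε(ρ)) = γ·√(1−A²). -/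

import Mathlib

open Matrix Kronecker BigOperators
open scoped ComplexOrder

noncomputable section

/-- A density matrix: positive semidefinite with trace 1. -/
def IsDensityMatrix {n : Type*} [Fintype n] [DecidableEq n] (ρ : Matrix n n ℂ) : Prop :=
  ρ.PosSemidef ∧ ρ.trace = 1

/-- The l₁-norm imaginarity measure: sum of |Im ρᵢⱼ| over off-diagonal entries. -/
noncomputable def Fl1 {n : Type*} [Fintype n] [DecidableEq n] (ρ : Matrix n n ℂ) : ℝ :=
  ∑ i, ∑ j, if i = j then 0 else |(ρ i j).im|

/-- The trace norm ‖M‖₁ = Tr √(M†M). -/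
noncomputable def traceNorm {n : Type*} [Fintype n] [DecidableEq n] (M : Matrix n n ℂ) : ℝ :=
  (((Matrix.posSemidef_conjTranspose_mul_self M).1.eigenvectorUnitary : Matrix n n ℂ) *
      diagonal (((↑) : ℝ → ℂ) ∘ (Real.sqrt ·) ∘ (Matrix.posSemidef_conjTranspose_mul_self M).1.eigenvalues) *
      (star (Matrix.posSemidef_conjTranspose_mul_self M).1.eigenvectorUnitary : Matrix n n ℂ)).trace.re

/-- The robustness of imaginarity: (1/2)‖ρ − ρᵀ‖₁. -/
noncomputable def FR {n : Type*} [Fintype n] [DecidableEq n] (ρ : Matrix n n ℂ) : ℝ :=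
  traceNorm (ρ - ρᵀ) / 2

/-- Von Neumann entropy (base-2), via eigenvalues of a Hermitian matrix
(junk value 0 if not Hermitian). -/
noncomputable def vnEntropy {n : Type*} [Fintype n] [DecidableEq n] (σ : Matrix n n ℂ) : ℝ :=
  if h : σ.IsHermitian then -∑ j, (h.eigenvalues j) * Real.logb 2 (h.eigenvalues j) else 0

/-- The relative entropy of imaginarity: S(Re ρ) − S(ρ), Re ρ = (ρ + ρᵀ)/2. -/
noncomputable def Fr {n : Type*} [Fintype n] [DecidableEq n] (ρ : Matrix n n ℂ) : ℝ :=
  vnEntropy ((1/2 : ℂ) • (ρ + ρᵀ)) - vnEntropy ρ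

/-- The canonical single-qubit state ρ_A. -/
noncomputable def rhoA (A : ℝ) : Matrix (Fin 2) (Fin 2) ℂ :=
  !![(((1 + A) / 2 : ℝ) : ℂ), -(Complex.I / 2) * (Real.sqrt (1 - A ^ 2) : ℂ);
     (Complex.I / 2) * (Real.sqrt (1 - A ^ 2) : ℂ), (((1 - A) / 2 : ℝ) : ℂ)]

/-- Density matrix of the maximal imaginary state |+⟩ = (|0⟩ + i|1⟩)/√2. -/
noncomputable def Mplus : Matrix (Fin 2) (Fin 2) ℂ :=
  (1/2 : ℂ) • !![1, -Complex.I; Complex.I, 1]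

/-- The dual-rail two-qubit state √((1+A)/2)|01⟩ + i√((1−A)/2)|10⟩. -/
noncomputable def dualRail (A : ℝ) : Fin 2 × Fin 2 → ℂ := fun q =>
  if q = ((0 : Fin 2), (1 : Fin 2)) then (Real.sqrt ((1 + A) / 2) : ℂ)
  else if q = ((1 : Fin 2), (0 : Fin 2)) then Complex.I * (Real.sqrt ((1 - A) / 2) : ℂ)
  else 0

/-- Single-qubit amplitude damping Kraus operators. -/
noncomputable def adKraus (γ : ℝ) : Fin 2 → Matrix (Fin 2) (Fin 2) ℂ :=
  ![!![1, 0; 0, (Real.sqrt (1 - γ) : ℂ)], !![0, (Real.sqrt γ : ℂ); 0, 0]]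

/-- The two-qubit channel ε_AD ⊗ ε_AD. -/
noncomputable def adTensor (γ : ℝ) (ρ : Matrix (Fin 2 × Fin 2) (Fin 2 × Fin 2) ℂ) :
    Matrix (Fin 2 × Fin 2) (Fin 2 × Fin 2) ℂ :=
  ∑ a : Fin 2, ∑ b : Fin 2,
    (adKraus γ a ⊗ₖ adKraus γ b) * ρ * (adKraus γ a ⊗ₖ adKraus γ b)ᴴ


/-! ### Auxiliary definitions and lemmas -/

noncomputable def Rmat (A : ℝ) : Matrix (Fin 2 × Fin 2) (Fin 2 × Fin 2) ℂ :=
  Matrix.of fun p q =>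
    if p = (0,1) ∧ q = (0,1) then (((1 + A) / 2 : ℝ) : ℂ)
    else if p = (0,1) ∧ q = (1,0) then -(Complex.I * ((Real.sqrt (1 - A^2) / 2 : ℝ) : ℂ))
    else if p = (1,0) ∧ q = (0,1) then Complex.I * ((Real.sqrt (1 - A^2) / 2 : ℝ) : ℂ)
    else if p = (1,0) ∧ q = (1,0) then (((1 - A) / 2 : ℝ) : ℂ)
    else 0

noncomputable def Emat (γ A : ℝ) : Matrix (Fin 2 × Fin 2) (Fin 2 × Fin 2) ℂ :=
  Matrix.of fun p q =>
    if p = (0,0) ∧ q = (0,0) then ((γ : ℝ) : ℂ)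
    else if p = (0,1) ∧ q = (0,1) then (((1 - γ) * ((1 + A) / 2) : ℝ) : ℂ)
    else if p = (0,1) ∧ q = (1,0) then -(Complex.I * (((1 - γ) * (Real.sqrt (1 - A^2) / 2) : ℝ) : ℂ))
    else if p = (1,0) ∧ q = (0,1) then Complex.I * (((1 - γ) * (Real.sqrt (1 - A^2) / 2) : ℝ) : ℂ)
    else if p = (1,0) ∧ q = (1,0) then (((1 - γ) * ((1 - A) / 2) : ℝ) : ℂ)
    else 0

def Nmat (t : ℝ) : Matrix (Fin 2 × Fin 2) (Fin 2 × Fin 2) ℂ :=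
  Matrix.of fun p q =>
    if p = (0,1) ∧ q = (1,0) then -(Complex.I * t)
    else if p = (1,0) ∧ q = (0,1) then Complex.I * t else 0

lemma traceNorm_Nmat (t : ℝ) (ht : 0 ≤ t) : traceNorm (Nmat t) = 2 * t := by
  set d : Fin 2 × Fin 2 → ℂ := fun p => if p = (0,1) ∨ p = (1,0) then (t : ℂ) else 0 with hd
  have hDpsd : Matrix.PosSemidef (Matrix.diagonal d) := by
    refine Matrix.posSemidef_diagonal_iff.mpr fun i => ?_
    by_cases h : i = (0,1) ∨ i = (1,0) <;> simp [hd, h]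
    · exact_mod_cast ht
  have hsq : (Matrix.diagonal d) ^ 2 = (Nmat t)ᴴ * Nmat t := by
    rw [pow_two, Matrix.diagonal_mul_diagonal]
    ext ⟨i1,i2⟩ ⟨j1,j2⟩
    fin_cases i1 <;> fin_cases i2 <;> fin_cases j1 <;> fin_cases j2 <;>
      simp [Nmat, Matrix.mul_apply, Fintype.sum_prod_type, Fin.sum_univ_two, hd,
        Matrix.diagonal, Prod.ext_iff, Complex.ext_iff]
  have hH := (Matrix.posSemidef_conjTranspose_mul_self (Nmat t)).1
  have hDsa : IsSelfAdjoint (Matrix.diagonal d) := hDpsd.1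
  have key : traceNorm (Nmat t) = (cfc Real.sqrt ((Nmat t)ᴴ * Nmat t)).trace.re := by
    rw [hH.cfc_eq, IsHermitian.cfc, Unitary.conjStarAlgAut_apply]; rfl
  have this : cfc Real.sqrt ((Nmat t)ᴴ * Nmat t) = Matrix.diagonal d := by
    rw [← hsq, ← cfc_pow_id (R := ℝ) (Matrix.diagonal d) 2 hDsa,
      ← cfc_comp Real.sqrt (fun x : ℝ => x ^ 2) (Matrix.diagonal d) hDsa]
    conv_rhs => rw [← cfc_id' ℝ (Matrix.diagonal d) hDsa]
    apply cfc_congr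
    intro x hx
    rw [hDpsd.1.spectrum_real_eq_range_eigenvalues] at hx
    obtain ⟨i, rfl⟩ := hx
    simp [Real.sqrt_sq (hDpsd.eigenvalues_nonneg i)]
  rw [key, this, Matrix.trace_diagonal]
  simp [hd, Fintype.sum_prod_type, Fin.sum_univ_two, Prod.ext_iff]
  ring

lemma sqrt_mul_sqrt (A : ℝ) (hA0 : 0 ≤ A) (hA1 : A ≤ 1) :
    Real.sqrt ((1 + A) / 2) * Real.sqrt ((1 - A) / 2) = Real.sqrt (1 - A ^ 2) / 2 := by
  rw [← Real.sqrt_mul (by linarith)]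
  rw [show (1 + A) / 2 * ((1 - A) / 2) = (1 - A ^ 2) * (2⁻¹)^2 by ring]
  rw [Real.sqrt_mul (by nlinarith), Real.sqrt_sq (by norm_num)]
  ring

lemma rho_eq (A : ℝ) (hA0 : 0 ≤ A) (hA1 : A ≤ 1) :
    (Matrix.of fun i j => dualRail A i * (starRingEnd ℂ) (dualRail A j)) = Rmat A := by
  have h2 : Real.sqrt ((1 + A) / 2) * Real.sqrt ((1 + A) / 2) = (1 + A) / 2 :=
    Real.mul_self_sqrt (by linarith)
  have h3 : Real.sqrt ((1 - A) / 2) * Real.sqrt ((1 - A) / 2) = (1 - A) / 2 :=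
    Real.mul_self_sqrt (by linarith)
  have h1 := sqrt_mul_sqrt A hA0 hA1
  set x := Real.sqrt ((1 + A) / 2) with hxd
  set y := Real.sqrt ((1 - A) / 2) with hyd
  set s := Real.sqrt (1 - A ^ 2) with hsd
  have h1' : (x : ℂ) * y = (s : ℂ) / 2 := by exact_mod_cast congrArg Complex.ofReal h1
  have h2' : (x : ℂ) * x = (((1 + A) / 2 : ℝ) : ℂ) := by exact_mod_cast congrArg Complex.ofReal h2
  have h3' : (y : ℂ) * y = (((1 - A) / 2 : ℝ) : ℂ) := by exact_mod_cast congrArg Complex.ofReal h3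
  push_cast at h1' h2' h3'
  ext ⟨i1, i2⟩ ⟨j1, j2⟩
  fin_cases i1 <;> fin_cases i2 <;> fin_cases j1 <;> fin_cases j2 <;>
    simp [dualRail, Rmat, Prod.ext_iff, -Real.sqrt_div, -Real.sqrt_div'] <;>
    first
      | linear_combination h2'
      | linear_combination h3'
      | linear_combination h1'
      | linear_combination Complex.I * h1'
      | linear_combination (-Complex.I) * h1'
      | linear_combination (-((x:ℂ)*(x:ℂ))) * Complex.I_sq + h2'
      | linear_combination (-((y:ℂ)*(y:ℂ))) * Complex.I_sq + h3'

set_option maxHeartbeats 2000000 in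
lemma adTensor_Rmat (A γ : ℝ) (hγ0 : 0 ≤ γ) (hγ1 : γ ≤ 1) :
    adTensor γ (Rmat A) = Emat γ A := by
  have hg2 : ((Real.sqrt γ : ℂ))^2 = (γ : ℂ) := by
    rw [← Complex.ofReal_pow, Real.sq_sqrt hγ0]
  have hh2 : ((Real.sqrt (1 - γ) : ℂ))^2 = 1 - (γ : ℂ) := by
    rw [← Complex.ofReal_pow, Real.sq_sqrt (by linarith : (0:ℝ) ≤ 1 - γ)]; push_cast; ring
  ext ⟨i1, i2⟩ ⟨j1, j2⟩
  fin_cases i1 <;> fin_cases i2 <;> fin_cases j1 <;> fin_cases j2 <;>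
    simp [adTensor, adKraus, Rmat, Emat, Matrix.mul_apply, Matrix.kroneckerMap_apply,
      Fintype.sum_prod_type, Fin.sum_univ_two, Prod.ext_iff,
      -Real.sqrt_div, -Real.sqrt_div']
  all_goals ring_nf
  all_goals simp only [hg2, hh2]
  all_goals push_cast
  all_goals ring

lemma Fl1_Rmat (A : ℝ) : Fl1 (Rmat A) = Real.sqrt (1 - A ^ 2) := by
  have hs : 0 ≤ Real.sqrt (1 - A ^ 2) := Real.sqrt_nonneg _
  simp [Fl1, Rmat, Fintype.sum_prod_type, Fin.sum_univ_two, Prod.ext_iff,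
    abs_of_nonneg, hs, abs_of_nonneg (by linarith : (0:ℝ) ≤ Real.sqrt (1 - A^2) / 2)]

lemma Fl1_Emat (γ A : ℝ) (hγ1 : γ ≤ 1) : Fl1 (Emat γ A) = (1 - γ) * Real.sqrt (1 - A ^ 2) := by
  have hs : 0 ≤ Real.sqrt (1 - A ^ 2) := Real.sqrt_nonneg _
  have h : (0:ℝ) ≤ (1 - γ) * (Real.sqrt (1 - A^2) / 2) := by
    apply mul_nonneg (by linarith) (by linarith)
  simp [Fl1, Emat, Fintype.sum_prod_type, Fin.sum_univ_two, Prod.ext_iff, abs_of_nonneg h]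
  ring

lemma Rmat_sub_transpose (A : ℝ) :
    Rmat A - (Rmat A)ᵀ = Nmat (Real.sqrt (1 - A ^ 2)) := by
  ext ⟨i1,i2⟩ ⟨j1,j2⟩
  fin_cases i1 <;> fin_cases i2 <;> fin_cases j1 <;> fin_cases j2 <;>
    simp [Rmat, Nmat, Prod.ext_iff] <;> ring

lemma Emat_sub_transpose (γ A : ℝ) :
    Emat γ A - (Emat γ A)ᵀ = Nmat ((1 - γ) * Real.sqrt (1 - A ^ 2)) := by
  ext ⟨i1,i2⟩ ⟨j1,j2⟩
  fin_cases i1 <;> fin_cases i2 <;> fin_cases j1 <;> fin_cases j2 <;>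
    simp [Emat, Nmat, Prod.ext_iff] <;> push_cast <;> ring

/-- decay of F_{l₁} and F_R for a dual-rail two-qubit state under the
amplitude damping channel. -/
theorem decay_dual_rail_ad (A γ : ℝ) (hA0 : 0 ≤ A) (hA1 : A ≤ 1)
    (hγ0 : 0 ≤ γ) (hγ1 : γ ≤ 1) :
    Fl1 (Matrix.of fun i j => dualRail A i * (starRingEnd ℂ) (dualRail A j))
      - Fl1 (adTensor γ (Matrix.of fun i j => dualRail A i * (starRingEnd ℂ) (dualRail A j)))
      = γ * Real.sqrt (1 - A ^ 2) ∧
    FR (Matrix.of fun i j => dualRail A i * (starRingEnd ℂ) (dualRail A j))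
      - FR (adTensor γ (Matrix.of fun i j => dualRail A i * (starRingEnd ℂ) (dualRail A j)))
      = γ * Real.sqrt (1 - A ^ 2) := by
  have hs : 0 ≤ Real.sqrt (1 - A ^ 2) := Real.sqrt_nonneg _
  have h1γs : (0:ℝ) ≤ (1 - γ) * Real.sqrt (1 - A ^ 2) := mul_nonneg (by linarith) hs
  rw [rho_eq A hA0 hA1, adTensor_Rmat A γ hγ0 hγ1]
  constructor
  · rw [Fl1_Rmat, Fl1_Emat γ A hγ1]; ring
  · simp only [FR, Rmat_sub_transpose, Emat_sub_transpose,
      traceNorm_Nmat _ hs, traceNorm_Nmat _ h1γs]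
    ring
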